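/- Let 0 → A → B → C → 0, with maps f : A → B and g : B → C, be an almost split conflation in C. Let p : P → C be a projective cover in C, i.e., a deflation of C with P C-projective such that every endomorphism φ : P → P with p ∘ φ = p is an automorphism, and let p′ : P → B be any map with g ∘ p′ = p (such p′ exists because g is right almost split and p is not a split epimorphism). Then the sequence 0 → (𝟙_A : A → A) → ((f,p′) : A ⊕ P → B) → (p : P → C) → 0 in the epimorphism category F(C), whose first map is the arrow morphism ((1,0)ᵗ, f) and whose second map is the arrow morphism ([0,1], g), is an almost split conflation in F(C). -/

import Mathlib

open CategoryTheory CategoryTheory.Limits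

universe u

section Defs
variable {Λ : Type u} [Ring Λ]

/-- A short exact sequence `0 → X → Y → Z → 0` of Λ-modules. -/
def ShortExactSeq {X Y Z : ModuleCat.{u} Λ} (f : X ⟶ Y) (g : Y ⟶ Z) : Prop :=
  Function.Injective f ∧ Function.Surjective g ∧ Function.Exact f g

variable (C : Set (ModuleCat.{u} Λ))

/-- An inflation of the exact category `C`: an injective map between objects of `C`
whose cokernel lies in `C`. -/
def IsInflation {X Y : ModuleCat.{u} Λ} (f : X ⟶ Y) : Prop :=
  X ∈ C ∧ Y ∈ C ∧ Function.Injective f ∧ ∃ Z ∈ C, ∃ g : Y ⟶ Z, ShortExactSeq f g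

/-- A deflation of the exact category `C`: a surjective map between objects of `C`
whose kernel lies in `C`. -/
def IsDeflation {X Y : ModuleCat.{u} Λ} (f : X ⟶ Y) : Prop :=
  X ∈ C ∧ Y ∈ C ∧ Function.Surjective f ∧ ∃ Z ∈ C, ∃ g : Z ⟶ X, ShortExactSeq g f

/-- The monomorphism category `S(C)`, as a subcategory of the arrow category. -/
def SMono : Set (Arrow (ModuleCat.{u} Λ)) := {a | IsInflation C a.hom}

/-- The epimorphism category `F(C)`, as a subcategory of the arrow category. -/
def FEpi : Set (Arrow (ModuleCat.{u} Λ)) := {a | IsDeflation C a.hom}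

/-- `I` is a `C`-injective object. -/
def CInjective (I : ModuleCat.{u} Λ) : Prop :=
  I ∈ C ∧ ∀ (U V : ModuleCat.{u} Λ), U ∈ C → V ∈ C →
    ∀ (f : I ⟶ U) (g : U ⟶ V), ShortExactSeq f g → ∃ r : U ⟶ I, f ≫ r = 𝟙 I

/-- `P` is a `C`-projective object. -/
def CProjective (P : ModuleCat.{u} Λ) : Prop :=
  P ∈ C ∧ ∀ (U V : ModuleCat.{u} Λ), U ∈ C → V ∈ C →
    ∀ (f : U ⟶ V) (g : V ⟶ P), ShortExactSeq f g → ∃ s : P ⟶ V, s ≫ g = 𝟙 P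

/-- `C` has enough `C`-injectives. -/
def EnoughCInjectives : Prop :=
  ∀ X ∈ C, ∃ (I X' : ModuleCat.{u} Λ), CInjective C I ∧ X' ∈ C ∧
    ∃ (e : X ⟶ I) (q : I ⟶ X'), ShortExactSeq e q

/-- `C` has enough `C`-projectives. -/
def EnoughCProjectives : Prop :=
  ∀ X ∈ C, ∃ (P X' : ModuleCat.{u} Λ), CProjective C P ∧ X' ∈ C ∧
    ∃ (q : X' ⟶ P) (p : P ⟶ X), ShortExactSeq q p

def ClosedUnderIso : Prop := ∀ (M N : ModuleCat.{u} Λ), (M ≅ N) → M ∈ C → N ∈ C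
def ContainsZero : Prop := ∀ M : ModuleCat.{u} Λ, Subsingleton M → M ∈ C
def ClosedUnderSums : Prop := ∀ M N : ModuleCat.{u} Λ, M ∈ C → N ∈ C → (M ⊞ N) ∈ C
def ClosedUnderExtensions : Prop :=
  ∀ (X Y Z : ModuleCat.{u} Λ) (f : X ⟶ Y) (g : Y ⟶ Z),
    X ∈ C → Z ∈ C → ShortExactSeq f g → Y ∈ C

end Defs

section Approx
variable {A : Type*} [Category A] (D : Set A)

/-- `g : Y ⟶ Z` is a right `D`-approximation of `Z`. -/
def IsRightApprox {Y Z : A} (g : Y ⟶ Z) : Prop :=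
  Y ∈ D ∧ ∀ W ∈ D, ∀ u : W ⟶ Z, ∃ v : W ⟶ Y, v ≫ g = u

/-- `g : Z ⟶ Y` is a left `D`-approximation of `Z`. -/
def IsLeftApprox {Z Y : A} (g : Z ⟶ Y) : Prop :=
  Y ∈ D ∧ ∀ W ∈ D, ∀ u : Z ⟶ W, ∃ v : Y ⟶ W, g ≫ v = u

end Approx

section Finiteness
variable {Λ : Type u} [Ring Λ]

/-- Contravariant finiteness of `C` in `mod Λ` (the finite-dimensional Λ-modules). -/
def ContravariantlyFinite (C : Set (ModuleCat.{u} Λ)) : Prop :=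
  ∀ M : ModuleCat.{u} Λ, Module.Finite Λ M →
    ∃ (Y : ModuleCat.{u} Λ) (g : Y ⟶ M), IsRightApprox C g

/-- Covariant finiteness of `C` in `mod Λ`. -/
def CovariantlyFinite (C : Set (ModuleCat.{u} Λ)) : Prop :=
  ∀ M : ModuleCat.{u} Λ, Module.Finite Λ M →
    ∃ (Y : ModuleCat.{u} Λ) (g : M ⟶ Y), IsLeftApprox C g

end Finiteness

section ArrowAS
variable {Λ : Type u} [Ring Λ]
variable (D : Set (Arrow (ModuleCat.{u} Λ)))

/-- A conflation of the full subcategory `D` of the arrow category. -/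
def ArrowConflation {a b c : Arrow (ModuleCat.{u} Λ)} (φ : a ⟶ b) (ψ : b ⟶ c) : Prop :=
  a ∈ D ∧ b ∈ D ∧ c ∈ D ∧ ShortExactSeq φ.left ψ.left ∧ ShortExactSeq φ.right ψ.right

/-- `φ : a ⟶ b` is left almost split in `D`. -/
def ArrowLeftAlmostSplit {a b : Arrow (ModuleCat.{u} Λ)} (φ : a ⟶ b) : Prop :=
  (¬ ∃ r : b ⟶ a, φ ≫ r = 𝟙 a) ∧
  ∀ b' ∈ D, ∀ u : a ⟶ b', (¬ ∃ r : b' ⟶ a, u ≫ r = 𝟙 a) → ∃ v : b ⟶ b', φ ≫ v = u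

/-- `ψ : b ⟶ c` is right almost split in `D`. -/
def ArrowRightAlmostSplit {b c : Arrow (ModuleCat.{u} Λ)} (ψ : b ⟶ c) : Prop :=
  (¬ ∃ s : c ⟶ b, s ≫ ψ = 𝟙 c) ∧
  ∀ b' ∈ D, ∀ u : b' ⟶ c, (¬ ∃ s : c ⟶ b', s ≫ u = 𝟙 c) → ∃ v : b' ⟶ b, v ≫ ψ = u

/-- An almost split conflation in `D`. -/
def ArrowAlmostSplitConflation {a b c : Arrow (ModuleCat.{u} Λ)} (φ : a ⟶ b) (ψ : b ⟶ c) :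
    Prop :=
  ArrowConflation D φ ψ ∧ (¬ ∃ r : b ⟶ a, φ ≫ r = 𝟙 a) ∧
    ArrowLeftAlmostSplit D φ ∧ ArrowRightAlmostSplit D ψ

end ArrowAS

section ModAS
variable {Λ : Type u} [Ring Λ] (C : Set (ModuleCat.{u} Λ))

/-- `f : X ⟶ Y` is left almost split in `C`. -/
def ModLeftAlmostSplit {X Y : ModuleCat.{u} Λ} (f : X ⟶ Y) : Prop :=
  (¬ ∃ r : Y ⟶ X, f ≫ r = 𝟙 X) ∧
  ∀ Y' ∈ C, ∀ u : X ⟶ Y', (¬ ∃ r : Y' ⟶ X, u ≫ r = 𝟙 X) → ∃ v : Y ⟶ Y', f ≫ v = u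

/-- `g : Y ⟶ Z` is right almost split in `C`. -/
def ModRightAlmostSplit {Y Z : ModuleCat.{u} Λ} (g : Y ⟶ Z) : Prop :=
  (¬ ∃ s : Z ⟶ Y, s ≫ g = 𝟙 Z) ∧
  ∀ Y' ∈ C, ∀ u : Y' ⟶ Z, (¬ ∃ s : Z ⟶ Y', s ≫ u = 𝟙 Z) → ∃ v : Y' ⟶ Y, v ≫ g = u

/-- An almost split conflation `0 → X → Y → Z → 0` in `C`. -/
def ModAlmostSplitSeq {X Y Z : ModuleCat.{u} Λ} (f : X ⟶ Y) (g : Y ⟶ Z) : Prop :=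
  X ∈ C ∧ Y ∈ C ∧ Z ∈ C ∧ ShortExactSeq f g ∧ (¬ ∃ r : Y ⟶ X, f ≫ r = 𝟙 X) ∧
    ModLeftAlmostSplit C f ∧ ModRightAlmostSplit C g

end ModAS
section helpers
variable {Λ : Type u} [Ring Λ]

lemma happly {A B : ModuleCat.{u} Λ} {f g : A ⟶ B} (h : f = g) (x : A) : f x = g x := by rw [h]

lemma exists_factor_inj {A B X : ModuleCat.{u} Λ} (f : A ⟶ B) (hf : Function.Injective f)
    (s : X ⟶ B) (hs : ∀ x, s x ∈ LinearMap.range f.hom) :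
    ∃ t : X ⟶ A, t ≫ f = s := by
  refine ⟨ModuleCat.ofHom ((LinearEquiv.ofInjective f.hom hf).symm.toLinearMap.comp
    (s.hom.codRestrict (LinearMap.range f.hom) hs) : ↑X →ₗ[Λ] ↑A), ?_⟩
  ext x
  show f ((LinearEquiv.ofInjective f.hom hf).symm
    (⟨s x, hs x⟩ : LinearMap.range f.hom)) = s x
  exact LinearEquiv.ofInjective_symm_apply (f := f.hom) (h := hf)
    (x := (⟨s x, hs x⟩ : LinearMap.range f.hom))

lemma bdecomp {A P : ModuleCat.{u} Λ} (y : ↑(A ⊞ P)) :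
    (biprod.inl : A ⟶ A ⊞ P) ((biprod.fst : A ⊞ P ⟶ A) y)
      + (biprod.inr : P ⟶ A ⊞ P) ((biprod.snd : A ⊞ P ⟶ P) y) = y :=
  happly (biprod.total (X := A) (Y := P)) y

lemma cproj_lift {C : Set (ModuleCat.{u} Λ)}
    (hCext : ClosedUnderExtensions C) {P X' Y' : ModuleCat.{u} Λ}
    (hP : CProjective C P) {d' : X' ⟶ Y'} (hd : IsDeflation C d')
    (t : P ⟶ Y') : ∃ w : P ⟶ X', w ≫ d' = t := by
  obtain ⟨hX', hY', hsurj, K, hK, j, hjinj, hdsurj, hexact⟩ := hd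
  set Qsub : Submodule Λ (↑X' × ↑P) :=
    LinearMap.ker (d'.hom.comp (LinearMap.fst Λ ↑X' ↑P)
      - t.hom.comp (LinearMap.snd Λ ↑X' ↑P)) with hQdef
  set Q : ModuleCat.{u} Λ := ModuleCat.of Λ ↥Qsub with hQeq
  have hmem : ∀ z : ↑X' × ↑P, z ∈ Qsub ↔ d' z.1 = t z.2 := by
    intro z
    simp [hQdef, LinearMap.mem_ker, sub_eq_zero]
  have hι0 : ∀ k : ↑K, ((j k : ↑X'), (0 : ↑P)) ∈ Qsub := by
    intro k
    rw [hmem]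
    simp [hexact.apply_apply_eq_zero k]
  set ι : K ⟶ Q := ModuleCat.ofHom (LinearMap.codRestrict Qsub
      (LinearMap.prod j.hom (0 : ↑K →ₗ[Λ] ↑P)) (fun k => hι0 k) :
    ↑K →ₗ[Λ] ↥Qsub) with hιdef
  set π : Q ⟶ P := ModuleCat.ofHom ((LinearMap.snd Λ ↑X' ↑P).comp Qsub.subtype : ↥Qsub →ₗ[Λ] ↑P) with hπdef
  set ρ : Q ⟶ X' := ModuleCat.ofHom ((LinearMap.fst Λ ↑X' ↑P).comp Qsub.subtype : ↥Qsub →ₗ[Λ] ↑X') with hρdef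
  have hses : ShortExactSeq ι π := by
    refine ⟨?_, ?_, ?_⟩
    · intro k₁ k₂ hk
      have : ((j k₁ : ↑X'), (0 : ↑P)) = ((j k₂ : ↑X'), (0 : ↑P)) := congrArg Subtype.val hk
      exact hjinj (congrArg Prod.fst this)
    · intro m
      obtain ⟨x, hx⟩ := hsurj (t m)
      exact ⟨⟨(x, m), (hmem _).2 hx⟩, rfl⟩
    · intro y
      constructor
      · intro h0
        have h0' : ((show ↥Qsub from y) : ↑X' × ↑P).2 = 0 := h0
        have hd0 : d' ((show ↥Qsub from y) : ↑X' × ↑P).1 = 0 := by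
          have := (hmem _).1 (show ↥Qsub from y).2
          rw [this, h0', map_zero]
        obtain ⟨k, hk⟩ := (hexact _).1 hd0
        exact ⟨k, Subtype.ext (Prod.ext hk (h0'.symm))⟩
      · rintro ⟨k, rfl⟩
        rfl
  have hQC : Q ∈ C := hCext K Q P ι π hK hP.1 hses
  obtain ⟨sec, hsec⟩ := hP.2 K Q hK hQC ι π hses
  refine ⟨sec ≫ ρ, ?_⟩
  ext m
  have h1 : ((show ↥Qsub from sec m) : ↑X' × ↑P).2 = m := happly hsec m
  have h2 := (hmem ((show ↥Qsub from sec m) : ↑X' × ↑P)).1 (show ↥Qsub from sec m).2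
  show d' ((show ↥Qsub from sec m) : ↑X' × ↑P).1 = t m
  rw [h2, h1]
end helpers

/-- **Statement 17.** If `0 → A →f B →g Z → 0` is an almost split conflation in `C`,
`p : P → Z` is a projective cover in `C` and `p′ : P → B` lifts `p` through `g`, then
`0 → (𝟙_A) → ((f,p′) : A ⊕ P → B) → (p : P → Z) → 0` is an almost split conflation
in `F(C)`. -/
theorem almost_split_fepi_ending_at_projective_cover
    (k : Type u) [Field k] (Λ : Type u) [Ring Λ] [Algebra k Λ] [FiniteDimensional k Λ]
    (C : Set (ModuleCat.{u} Λ))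
    (hCfd : ∀ M ∈ C, Module.Finite Λ M)
    (hC0 : ContainsZero C) (hCiso : ClosedUnderIso C)
    (hCsum : ClosedUnderSums C) (hCext : ClosedUnderExtensions C)
    {A B Z P : ModuleCat.{u} Λ} (f : A ⟶ B) (g : B ⟶ Z)
    (h : ModAlmostSplitSeq C f g)
    (p : P ⟶ Z) (hdefl : IsDeflation C p) (hP : CProjective C P)
    (hcover : ∀ φ : P ⟶ P, φ ≫ p = p → IsIso φ)
    (p' : P ⟶ B) (hp' : p' ≫ g = p) :
    ArrowAlmostSplitConflation (FEpi C)
      (a := Arrow.mk (𝟙 A))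
      (b := Arrow.mk (biprod.desc f p'))
      (c := Arrow.mk p)
      (Arrow.homMk (u := biprod.inl) (v := f) (by simp))
      (Arrow.homMk (u := biprod.snd) (v := g)
        (by
          have hex : Function.Exact f g := h.2.2.2.1.2.2
          have hfg : f ≫ g = 0 := by
            ext x
            simpa using hex.apply_apply_eq_zero x
          apply biprod.hom_ext'
          · simp [hfg]
          · simp [hp'])) := by
  have hdefl' := hdefl
  obtain ⟨hAC, hBC, hZC, hses0, hnsplit, hlas, hras⟩ := h
  obtain ⟨hfinj, hgsurj, hfg⟩ := hses0
  obtain ⟨hPC, hZC', hpsurj, Z₀, hZ₀C, q, hqinj, hpsurj2, hqexact⟩ := hdefl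
  have hp'g : ∀ x : ↑P, g (p' x) = p x := fun x => happly hp' x
  -- construct the kernel inclusion for `biprod.desc f p'`
  have hmem₀ : ∀ z : ↑Z₀,
      (-(q ≫ p') : Z₀ ⟶ B) z ∈ LinearMap.range (f : A ⟶ B).hom := by
    intro z
    have h1 : g (p' (q z)) = 0 := by
      rw [hp'g (q z)]
      exact hqexact.apply_apply_eq_zero z
    obtain ⟨aa, haa⟩ := (hfg _).1 h1
    refine LinearMap.mem_range.2 ⟨-aa, ?_⟩
    show f (-aa) = -(p' (q z))
    rw [map_neg, haa]
  obtain ⟨t₀, ht₀⟩ := exists_factor_inj f hfinj (-(q ≫ p')) hmem₀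
  set j0 : Z₀ ⟶ A ⊞ P := biprod.lift t₀ q with hj0def
  have hj0comp : j0 ≫ biprod.desc f p' = 0 := by
    rw [hj0def, biprod.lift_desc, ht₀]
    abel
  have hfT : ∀ z : ↑Z₀, f (t₀ z) = -(p' (q z)) := fun z => happly ht₀ z
  have hj0fst : ∀ z : ↑Z₀, (biprod.fst : A ⊞ P ⟶ A) (j0 z) = t₀ z :=
    fun z => happly (biprod.lift_fst t₀ q) z
  have hj0snd : ∀ z : ↑Z₀, (biprod.snd : A ⊞ P ⟶ P) (j0 z) = q z :=
    fun z => happly (biprod.lift_snd t₀ q) z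
  have hdesc_inl : ∀ aa : ↑A,
      (biprod.desc f p' : A ⊞ P ⟶ B) ((biprod.inl : A ⟶ A ⊞ P) aa) = f aa :=
    fun aa => happly (biprod.inl_desc f p') aa
  have hdesc_inr : ∀ x : ↑P,
      (biprod.desc f p' : A ⊞ P ⟶ B) ((biprod.inr : P ⟶ A ⊞ P) x) = p' x :=
    fun x => happly (biprod.inr_desc f p') x
  have hdesc_elem : ∀ y : ↑(A ⊞ P), (biprod.desc f p' : A ⊞ P ⟶ B) y
      = f ((biprod.fst : A ⊞ P ⟶ A) y) + p' ((biprod.snd : A ⊞ P ⟶ P) y) := by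
    intro y
    conv_lhs => rw [← bdecomp y]
    rw [map_add, hdesc_inl, hdesc_inr]
  have hdescsurj : Function.Surjective (biprod.desc f p' : A ⊞ P ⟶ B) := by
    intro bb
    obtain ⟨x, hx⟩ := hpsurj (g bb)
    have hker : g (bb - p' x) = 0 := by rw [map_sub, hp'g, hx, sub_self]
    obtain ⟨aa, haa⟩ := (hfg _).1 hker
    refine ⟨(biprod.inl : A ⟶ A ⊞ P) aa + (biprod.inr : P ⟶ A ⊞ P) x, ?_⟩
    rw [map_add, hdesc_inl, hdesc_inr, haa]
    abel
  have hkses : ShortExactSeq j0 (biprod.desc f p') := by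
    refine ⟨?_, hdescsurj, ?_⟩
    · intro z₁ z₂ hz
      apply hqinj
      rw [← hj0snd z₁, ← hj0snd z₂, hz]
    · intro y
      constructor
      · intro h0
        have e : f ((biprod.fst : A ⊞ P ⟶ A) y) + p' ((biprod.snd : A ⊞ P ⟶ P) y) = 0 := by
          rw [← hdesc_elem y]
          exact h0
        have hp0 : p ((biprod.snd : A ⊞ P ⟶ P) y) = 0 := by
          have hge := congrArg (fun w : ↑B => g w) e
          simp only [map_add, map_zero] at hge
          rw [hfg.apply_apply_eq_zero, hp'g, zero_add] at hge
          exact hge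
        obtain ⟨z, hz⟩ := (hqexact _).1 hp0
        have hfy : f ((biprod.fst : A ⊞ P ⟶ A) y) = f (t₀ z) := by
          rw [hfT z, hz]
          exact eq_neg_of_add_eq_zero_left e
        have hfst := hfinj hfy
        refine ⟨z, ?_⟩
        rw [← bdecomp (j0 z), hj0fst, hj0snd, ← hfst, hz]
        exact bdecomp y
      · rintro ⟨z, rfl⟩
        exact happly hj0comp z
  -- memberships in FEpi C
  have haF : Arrow.mk (𝟙 A) ∈ FEpi C := by
    refine ⟨hAC, hAC, fun y => ⟨y, rfl⟩, ModuleCat.of Λ PUnit.{u+1},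
      hC0 _ inferInstance, 0, fun x y _ => Subsingleton.elim x y, fun y => ⟨y, rfl⟩, ?_⟩
    intro y
    constructor
    · intro h0
      exact ⟨0, by simpa using (show y = 0 from h0).symm⟩
    · rintro ⟨x, rfl⟩
      rfl
  have hbF : Arrow.mk (biprod.desc f p') ∈ FEpi C :=
    ⟨hCsum A P hAC hPC, hBC, hdescsurj, Z₀, hZ₀C, j0, hkses⟩
  have hcF : Arrow.mk p ∈ FEpi C := hdefl'
  -- the left short exact sequence
  have hlses : ShortExactSeq (biprod.inl : A ⟶ A ⊞ P) (biprod.snd : A ⊞ P ⟶ P) := by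
    have e1 : ∀ aa : ↑A, (biprod.fst : A ⊞ P ⟶ A) ((biprod.inl : A ⟶ A ⊞ P) aa) = aa :=
      fun aa => happly biprod.inl_fst aa
    refine ⟨?_, ?_, ?_⟩
    · intro a₁ a₂ ha
      have := congrArg (fun y : ↑(A ⊞ P) => (biprod.fst : A ⊞ P ⟶ A) y) ha
      simpa only [e1] using this
    · intro x
      exact ⟨(biprod.inr : P ⟶ A ⊞ P) x, happly biprod.inr_snd x⟩
    · intro y
      constructor
      · intro h0
        refine ⟨(biprod.fst : A ⊞ P ⟶ A) y, ?_⟩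
        have hb := bdecomp y
        rw [h0, map_zero, add_zero] at hb
        exact hb
      · rintro ⟨aa, rfl⟩
        exact happly biprod.inl_snd aa
  -- non-splitness of φ
  have hφns : ¬ ∃ r : Arrow.mk (biprod.desc f p') ⟶ Arrow.mk (𝟙 A),
      (Arrow.homMk (u := biprod.inl) (v := f) (by simp) :
        Arrow.mk (𝟙 A) ⟶ Arrow.mk (biprod.desc f p')) ≫ r = 𝟙 (Arrow.mk (𝟙 A)) := by
    rintro ⟨r, hr⟩
    apply hnsplit
    refine ⟨r.right, ?_⟩
    have := congrArg CommaMorphism.right hr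
    simpa using this
  -- non-splitness of ψ
  have hψns : ¬ ∃ s : Arrow.mk p ⟶ Arrow.mk (biprod.desc f p'),
      s ≫ (Arrow.homMk (u := biprod.snd) (v := g) (by
        have hex : Function.Exact f g := hfg
        have hfg0 : f ≫ g = 0 := by
          ext x
          simpa using hex.apply_apply_eq_zero x
        apply biprod.hom_ext'
        · simp [hfg0]
        · simp [hp']) : Arrow.mk (biprod.desc f p') ⟶ Arrow.mk p) = 𝟙 (Arrow.mk p) := by
    rintro ⟨s, hs⟩
    apply hras.1
    refine ⟨s.right, ?_⟩
    have := congrArg CommaMorphism.right hs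
    simpa using this
  refine ⟨⟨haF, hbF, hcF, hlses, ⟨hfinj, hgsurj, hfg⟩⟩, hφns, ⟨hφns, ?_⟩, ⟨?_, ?_⟩⟩
  · -- left almost split: factorization property
    intro b' hb' u hu
    have hb'' : IsDeflation C b'.hom := hb'
    have huw : u.left ≫ b'.hom = u.right := by
      have := u.w
      simpa using this
    have hnm : ¬∃ r₂ : b'.right ⟶ A, u.right ≫ r₂ = 𝟙 A := by
      rintro ⟨r₂, hr₂⟩
      apply hu
      refine ⟨Arrow.homMk (u := b'.hom ≫ r₂) (v := r₂) (by simp), ?_⟩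
      apply CommaMorphism.ext
      · show u.left ≫ b'.hom ≫ r₂ = 𝟙 A
        rw [← Category.assoc, huw, hr₂]
      · show u.right ≫ r₂ = 𝟙 A
        exact hr₂
    obtain ⟨v₂, hv₂⟩ := hlas.2 b'.right hb''.2.1 u.right hnm
    obtain ⟨w, hw⟩ := cproj_lift hCext hP hb'' (p' ≫ v₂)
    refine ⟨Arrow.homMk (u := biprod.desc u.left w) (v := v₂) ?_, ?_⟩
    · show biprod.desc u.left w ≫ b'.hom = biprod.desc f p' ≫ v₂
      apply biprod.hom_ext'
      · rw [biprod.inl_desc_assoc, biprod.inl_desc_assoc, huw, hv₂]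
      · rw [biprod.inr_desc_assoc, biprod.inr_desc_assoc, hw]
    · apply CommaMorphism.ext
      · show (biprod.inl : A ⟶ A ⊞ P) ≫ biprod.desc u.left w = u.left
        simp
      · show f ≫ v₂ = u.right
        exact hv₂
  · exact hψns
  · -- right almost split: factorization property
    intro b' hb' u hu
    have hb'' : IsDeflation C b'.hom := hb'
    have huw : u.left ≫ p = b'.hom ≫ u.right := u.w
    have hnse : ¬∃ s₂ : Z ⟶ b'.right, s₂ ≫ u.right = 𝟙 Z := by
      rintro ⟨s₂, hs₂⟩
      obtain ⟨w, hw⟩ := cproj_lift hCext hP hb'' (p ≫ s₂)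
      have hφp : (w ≫ u.left) ≫ p = p := by
        rw [Category.assoc, huw, ← Category.assoc, hw, Category.assoc, hs₂, Category.comp_id]
      haveI := hcover (w ≫ u.left) hφp
      have hinv : inv (w ≫ u.left) ≫ p = p := by
        calc inv (w ≫ u.left) ≫ p = inv (w ≫ u.left) ≫ (w ≫ u.left) ≫ p := by rw [hφp]
        _ = p := IsIso.inv_hom_id_assoc _ _
      apply hu
      refine ⟨Arrow.homMk (u := inv (w ≫ u.left) ≫ w) (v := s₂) ?_, ?_⟩
      · show (inv (w ≫ u.left) ≫ w) ≫ b'.hom = p ≫ s₂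
        rw [Category.assoc, hw, ← Category.assoc, hinv]
      · apply CommaMorphism.ext
        · show (inv (w ≫ u.left) ≫ w) ≫ u.left = 𝟙 P
          rw [Category.assoc, IsIso.inv_hom_id]
          rfl
        · show s₂ ≫ u.right = 𝟙 Z
          exact hs₂
    obtain ⟨v₂, hv₂⟩ := hras.2 b'.right hb''.2.1 u.right hnse
    set S : b'.left ⟶ B := (show b'.left ⟶ B from b'.hom ≫ v₂) - u.left ≫ p' with hSdef
    have hmem₁ : ∀ x : ↑(b'.left), S x
        ∈ LinearMap.range (f : A ⟶ B).hom := by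
      intro x
      have e2 : g (v₂ (b'.hom x)) = u.right (b'.hom x) := happly hv₂ _
      have e3 : g (p' (u.left x)) = p (u.left x) := hp'g _
      have e4 : p (u.left x) = u.right (b'.hom x) := happly huw x
      have hg0 : g (S x) = 0 := by
        show g (v₂ (b'.hom x) - p' (u.left x)) = 0
        rw [map_sub, e2, e3, e4, sub_self]
      exact LinearMap.mem_range.2 ((hfg _).1 hg0)
    obtain ⟨t₁, ht₁⟩ := exists_factor_inj f hfinj S hmem₁
    refine ⟨Arrow.homMk (u := biprod.lift t₁ u.left) (v := v₂) ?_, ?_⟩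
    · show biprod.lift t₁ u.left ≫ biprod.desc f p' = b'.hom ≫ v₂
      rw [biprod.lift_desc, ht₁, hSdef]
      abel
    · apply CommaMorphism.ext
      · show biprod.lift t₁ u.left ≫ (biprod.snd : A ⊞ P ⟶ P) = u.left
        exact biprod.lift_snd _ _
      · show v₂ ≫ g = u.right
        exact hv₂
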